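/- Let V_1, …, V_r be disjoint finite sets with |V_i| = a_i ≥ 2, and let X_i = Δ(V_1) * ⋯ * Δ(V_{i−1}) * ∂Δ(V_i) * Δ(V_{i+1}) * ⋯ * Δ(V_r), a simplicial complex on V = V_1 ∪ ⋯ ∪ V_r. Then: L_K(X_i) = a_i − 1 for each i; the intersection ∩_{i=1}^r X_i equals the join ∂Δ(V_1) * ⋯ * ∂Δ(V_r), and L_K(∩_{i=1}^r X_i) = Σ_{i=1}^r a_i − r; the union ∪_{i=1}^r X_i equals ∂Δ(V), and L_K(∪_{i=1}^r X_i) = Σ_{i=1}^r a_i − 1. In particular, equality is attained in both inequalities L_K(∩ X_i) ≤ Σ L_K(X_i) and L_K(∪ X_i) ≤ Σ L_K(X_i) + r − 1. -/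

import Mathlib

open Finset

/-- A finite abstract simplicial complex on the vertex type `V` (possibly void;
any non-void complex contains the empty face `∅` by downward closure). -/
structure SComplex (V : Type) [DecidableEq V] where
  faces : Finset (Finset V)
  down_closed : ∀ ⦃σ : Finset V⦄, σ ∈ faces → ∀ ⦃τ : Finset V⦄, τ ⊆ σ → τ ∈ faces

namespace SComplex

variable {V : Type} [DecidableEq V]

/-- Intersection of two simplicial complexes on the same vertex set. -/
def inter (X Y : SComplex V) : SComplex V where
  faces := X.faces ∩ Y.faces
  down_closed := fun σ hσ τ hτ => by
    rw [Finset.mem_inter] at hσ ⊢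
    exact ⟨X.down_closed hσ.1 hτ, Y.down_closed hσ.2 hτ⟩

/-- Union of two simplicial complexes on the same vertex set. -/
def union (X Y : SComplex V) : SComplex V where
  faces := X.faces ∪ Y.faces
  down_closed := fun σ hσ τ hτ => by
    rw [Finset.mem_union] at hσ ⊢
    exact hσ.elim (fun h => Or.inl (X.down_closed h hτ)) (fun h => Or.inr (Y.down_closed h hτ))

/-- The induced subcomplex `X[S] = {σ ∈ X : σ ⊆ S}`. -/
def induced (X : SComplex V) (S : Finset V) : SComplex V where
  faces := X.faces.filter (fun σ => σ ⊆ S)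
  down_closed := fun σ hσ τ hτ => by
    rw [Finset.mem_filter] at hσ ⊢
    exact ⟨X.down_closed hσ.1 hτ, hτ.trans hσ.2⟩

/-- The link `lk(X,A) = {τ ∈ X : τ ∩ A = ∅, τ ∪ A ∈ X}`; it is the void
complex when `A ∉ X`. -/
def link (X : SComplex V) (A : Finset V) : SComplex V where
  faces := X.faces.filter (fun τ => τ ∩ A = ∅ ∧ τ ∪ A ∈ X.faces)
  down_closed := fun σ hσ τ hτ => by
    rw [Finset.mem_filter] at hσ ⊢
    refine ⟨X.down_closed hσ.1 hτ, Finset.subset_empty.1 ?_,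
      X.down_closed hσ.2.2 (Finset.union_subset_union hτ (Finset.Subset.refl A))⟩
    rw [← hσ.2.1]
    exact Finset.inter_subset_inter hτ (Finset.Subset.refl A)

/-- The full simplex `Δ(A)` on a vertex set `A`. -/
def simplexOn (A : Finset V) : SComplex V where
  faces := A.powerset
  down_closed := fun σ hσ τ hτ =>
    Finset.mem_powerset.2 (hτ.trans (Finset.mem_powerset.1 hσ))

/-- The boundary `∂Δ(A)` of the simplex on `A` (all proper subsets of `A`). -/
def bdSimplex (A : Finset V) : SComplex V where
  faces := A.powerset.erase A
  down_closed := fun σ hσ τ hτ => by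
    rw [Finset.mem_erase, Finset.mem_powerset] at hσ ⊢
    refine ⟨fun hτA => hσ.1 ?_, hτ.trans hσ.2⟩
    subst hτA
    exact Finset.Subset.antisymm hσ.2 hτ

variable [Fintype V]

/-- Intersection of a finite family of complexes on the same vertex set. -/
def interFam {r : ℕ} (X : Fin r → SComplex V) : SComplex V where
  faces := Finset.univ.filter (fun σ => ∀ i, σ ∈ (X i).faces)
  down_closed := fun σ hσ τ hτ => by
    rw [Finset.mem_filter] at hσ ⊢
    exact ⟨Finset.mem_univ τ, fun i => (X i).down_closed (hσ.2 i) hτ⟩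

/-- Union of a finite family of complexes on the same vertex set. -/
def unionFam {r : ℕ} (X : Fin r → SComplex V) : SComplex V where
  faces := Finset.univ.filter (fun σ => ∃ i, σ ∈ (X i).faces)
  down_closed := fun σ hσ τ hτ => by
    rw [Finset.mem_filter] at hσ ⊢
    obtain ⟨-, i, hi⟩ := hσ
    exact ⟨Finset.mem_univ τ, i, (X i).down_closed hi hτ⟩

/-- The join of a family of complexes `Z i`, the `i`-th one having its vertices
inside the block `Vs i` of a partition of the vertex set: the faces are the sets
whose trace on each block is a face of the corresponding complex. -/
def joinFam {r : ℕ} (Vs : Fin r → Finset V) (Z : Fin r → SComplex V) : SComplex V where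
  faces := Finset.univ.filter (fun σ => ∀ i, σ ∩ Vs i ∈ (Z i).faces)
  down_closed := fun σ hσ τ hτ => by
    rw [Finset.mem_filter] at hσ ⊢
    exact ⟨Finset.mem_univ τ, fun i =>
      (Z i).down_closed (hσ.2 i) (Finset.inter_subset_inter hτ (Finset.Subset.refl _))⟩

/-- The Alexander dual `X* = {τ : [n] - τ ∉ X}`. -/
def dual (X : SComplex V) : SComplex V where
  faces := Finset.univ.filter (fun τ => τᶜ ∉ X.faces)
  down_closed := fun σ hσ τ hτ => by
    rw [Finset.mem_filter] at hσ ⊢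
    exact ⟨Finset.mem_univ τ, fun hc => hσ.2 (X.down_closed hc (Finset.compl_subset_compl.2 hτ))⟩

/-- The set of faces of `X` of cardinality `k` (i.e. of dimension `k - 1`). -/
def cells (X : SComplex V) (k : ℕ) : Finset (Finset V) :=
  X.faces.filter (fun σ => σ.card = k)

/-- The space of simplicial `(k-1)`-dimensional chains of `X` with coefficients
in `K`: chains are indexed by cardinality, so degree `k` chains are spanned by
the faces of cardinality `k`.  (In particular degree `0` chains are spanned by
the empty face, giving the augmented chain complex computing reduced homology.) -/
abbrev Chains (K : Type) [Field K] (X : SComplex V) (k : ℕ) : Type := ↥(X.cells k) → K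

/-- The simplicial boundary map from degree `k+1` chains (on faces of
cardinality `k+1`) to degree `k` chains.  Signs are computed with respect to a
fixed enumeration of the vertices. -/
noncomputable def boundary (K : Type) [Field K] (X : SComplex V) (k : ℕ) :
    Chains K X (k+1) →ₗ[K] Chains K X k :=
  LinearMap.pi fun τ =>
    ∑ σ : ↥(X.cells (k+1)),
      (∑ v ∈ (σ : Finset V),
        if (σ : Finset V).erase v = (τ : Finset V) then
          ((-1 : K) ^ (((σ : Finset V)).filter
            (fun w => Fintype.equivFin V w < Fintype.equivFin V v)).card)
        else 0) • LinearMap.proj σ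

/-- Cycles of the (augmented) simplicial chain complex in degree `k`
(corresponding to homological dimension `k - 1`). -/
noncomputable def cyclesSub (K : Type) [Field K] (X : SComplex V) :
    (k : ℕ) → Submodule K (Chains K X k)
  | 0 => ⊤
  | (m+1) => LinearMap.ker (boundary K X m)

/-- The reduced simplicial homology `H̃_{k-1}(X; K)` (cardinality-indexed: the
argument `k` corresponds to homological dimension `k - 1`). -/
noncomputable abbrev RedHomology (K : Type) [Field K] (X : SComplex V) (k : ℕ) : Type :=
  ↥(cyclesSub K X k) ⧸ Submodule.comap (cyclesSub K X k).subtype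
      (LinearMap.range (boundary K X k))

/-- `h̃_{k-1}(X) = dim_K H̃_{k-1}(X; K)` (cardinality-indexed, as in
`RedHomology`). -/
noncomputable def redHomDim (K : Type) [Field K] (X : SComplex V) (k : ℕ) : ℕ :=
  Module.finrank K (RedHomology K X k)

/-- `dim_K H̃_k(X; K)` for an arbitrary integer `k`; it is zero for `k ≤ -2`.
Here the argument is the genuine homological dimension `k`. -/
noncomputable def redHomDimZ (K : Type) [Field K] (X : SComplex V) (k : ℤ) : ℕ :=
  if 0 ≤ k + 1 then redHomDim K X (k + 1).toNat else 0

/-- Chains supported on the faces of a subcomplex `A`, inside the chains of `X`. -/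
noncomputable def subChains (K : Type) [Field K] (X A : SComplex V) (k : ℕ) :
    Submodule K (Chains K X k) :=
  ⨅ (σ : ↥(X.cells k)) (_ : (σ : Finset V) ∉ A.faces), LinearMap.ker (LinearMap.proj σ)

/-- Relative cycles in homological dimension `i` for the pair `(X, A)`. -/
noncomputable def relCycles (K : Type) [Field K] (X A : SComplex V) (i : ℕ) :
    Submodule K (Chains K X (i+1)) :=
  Submodule.comap (boundary K X i) (subChains K X A i)

/-- The relative simplicial homology `H_i(X, A; K)` of the pair `(X, A)`. -/
noncomputable abbrev RelHomology (K : Type) [Field K] (X A : SComplex V) (i : ℕ) : Type :=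
  ↥(relCycles K X A i) ⧸ Submodule.comap (relCycles K X A i).subtype
      (subChains K X A (i+1) ⊔ LinearMap.range (boundary K X (i+1)))

/-- `dim_K H_i(X, A; K)`. -/
noncomputable def relHomDim (K : Type) [Field K] (X A : SComplex V) (i : ℕ) : ℕ :=
  Module.finrank K (RelHomology K X A i)

/-- `X` is `d`-Leray over `K`: every induced subcomplex has vanishing reduced
homology in dimensions `≥ d`. -/
def IsLeray (K : Type) [Field K] (d : ℕ) (X : SComplex V) : Prop :=
  ∀ S : Finset V, ∀ i : ℕ, d ≤ i → redHomDim K (X.induced S) (i + 1) = 0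

/-- The Leray number `L_K(X)`: the minimal `d` such that `X` is `d`-Leray over `K`. -/
noncomputable def lerayNum (K : Type) [Field K] (X : SComplex V) : ℕ :=
  sInf {d | IsLeray K d X}

end SComplex
set_option linter.unusedSectionVars false
set_option linter.unusedVariables false
section Dev
namespace SComplex
variable {V : Type} [DecidableEq V] [Fintype V]

lemma ext' {X Y : SComplex V} (h : X.faces = Y.faces) : X = Y := by
  cases X; cases Y; simpa using h

lemma mem_cells {X : SComplex V} {k : ℕ} {σ : Finset V} :
    σ ∈ X.cells k ↔ σ ∈ X.faces ∧ σ.card = k := Finset.mem_filter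

variable (K : Type) [Field K]

/-- the sign of removing `v` from `s`. -/
noncomputable def sgn (s : Finset V) (v : V) : K :=
  (-1 : K) ^ (s.filter (fun w => Fintype.equivFin V w < Fintype.equivFin V v)).card

lemma sgn_mul_self (s : Finset V) (v : V) : sgn K s v * sgn K s v = 1 := by
  rw [sgn, ← pow_add, ← two_mul, pow_mul, neg_one_sq, one_pow]

lemma sgn_insert_self (s : Finset V) (v : V) (hv : v ∉ s) :
    sgn K (insert v s) v = sgn K s v := by
  rw [sgn, sgn, Finset.filter_insert, if_neg (lt_irrefl _)]

lemma sgn_erase (s : Finset V) {u v : V} (hu : u ∈ s) (huv : u ≠ v) :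
    sgn K (s.erase u) v
      = (if Fintype.equivFin V u < Fintype.equivFin V v then (-1 : K) else 1) * sgn K s v := by
  rw [sgn, sgn, Finset.filter_erase]
  by_cases h : Fintype.equivFin V u < Fintype.equivFin V v
  · rw [Finset.card_erase_of_mem (Finset.mem_filter.2 ⟨hu, h⟩), if_pos h]
    have h0 : (s.filter (fun w => Fintype.equivFin V w < Fintype.equivFin V v)).card ≠ 0 := by
      intro hc
      have := Finset.card_eq_zero.1 hc
      exact Finset.ne_empty_of_mem (Finset.mem_filter.2 ⟨hu, h⟩) this
    obtain ⟨n, hn⟩ := Nat.exists_eq_succ_of_ne_zero h0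
    rw [hn]
    simp [pow_succ]
  · rw [Finset.erase_eq_of_notMem (by simp [h]), if_neg h, one_mul]

/-- key cancellation of signs -/
lemma sgn_cancel (s : Finset V) {u v : V} (hu : u ∈ s) (hv : v ∈ s) (huv : u ≠ v) :
    sgn K s u * sgn K (s.erase u) v + sgn K s v * sgn K (s.erase v) u = 0 := by
  rw [sgn_erase K s hu huv, sgn_erase K s hv (Ne.symm huv)]
  have : Fintype.equivFin V u < Fintype.equivFin V v ∨ Fintype.equivFin V v < Fintype.equivFin V u := by
    rcases lt_trichotomy (Fintype.equivFin V u) (Fintype.equivFin V v) with h|h|h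
    · exact Or.inl h
    · exact absurd ((Fintype.equivFin V).injective (by exact_mod_cast h)) huv
    · exact Or.inr h
  rcases this with h | h
  · rw [if_pos h, if_neg (by omega)]; ring
  · rw [if_neg (by omega), if_pos h]; ring

lemma boundary_apply (X : SComplex V) (k : ℕ) (c : Chains K X (k+1)) (τ : ↥(X.cells k)) :
    boundary K X k c τ =
      ∑ σ : ↥(X.cells (k+1)),
        (∑ v ∈ (σ : Finset V),
          if (σ : Finset V).erase v = (τ : Finset V) then sgn K (σ : Finset V) v else 0) * c σ := by
  simp [boundary, sgn, LinearMap.pi_apply, LinearMap.sum_apply, LinearMap.smul_apply,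
    LinearMap.proj_apply, smul_eq_mul]

end SComplex
end Dev
namespace SComplex
variable {V : Type} [DecidableEq V] [Fintype V] (K : Type) [Field K]

lemma boundary_apply' (X : SComplex V) (k : ℕ) (c : Chains K X (k+1)) (τ : ↥(X.cells k)) :
    boundary K X k c τ =
      ∑ u : V, if h : u ∉ (τ : Finset V) ∧ insert u (τ : Finset V) ∈ X.cells (k+1) then
        sgn K (insert u (τ : Finset V)) u * c ⟨insert u (τ : Finset V), h.2⟩ else 0 := by
  rw [boundary_apply]
  have hstep : ∀ σ : ↥(X.cells (k+1)),
      (∑ v ∈ (σ : Finset V),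
        if (σ : Finset V).erase v = (τ : Finset V) then sgn K (σ : Finset V) v else 0) * c σ
      = ∑ u : V, (if u ∈ (σ : Finset V) ∧ (σ : Finset V).erase u = (τ : Finset V) then
          sgn K (σ : Finset V) u else 0) * c σ := by
    intro σ
    rw [Finset.sum_mul]
    have e1 : ∀ u ∈ (σ : Finset V),
        (if (σ : Finset V).erase u = (τ : Finset V) then sgn K (σ : Finset V) u else 0) * c σ
        = (if u ∈ (σ : Finset V) ∧ (σ : Finset V).erase u = (τ : Finset V) then
            sgn K (σ : Finset V) u else 0) * c σ := by
      intro u hu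
      by_cases h2 : (σ : Finset V).erase u = (τ : Finset V)
      · rw [if_pos h2, if_pos ⟨hu, h2⟩]
      · rw [if_neg h2, if_neg (fun hc => h2 hc.2)]
    rw [Finset.sum_congr rfl e1]
    apply Finset.sum_subset (Finset.subset_univ _)
    intro u _ hu
    rw [if_neg (fun hc => hu hc.1), zero_mul]
  rw [Finset.sum_congr rfl (fun σ _ => hstep σ)]
  rw [Finset.sum_comm]
  apply Finset.sum_congr rfl
  intro u _
  by_cases h : u ∉ (τ : Finset V) ∧ insert u (τ : Finset V) ∈ X.cells (k+1)
  · rw [dif_pos h]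
    refine Finset.sum_eq_single_of_mem (⟨insert u (τ : Finset V), h.2⟩ : ↥(X.cells (k+1)))
      (Finset.mem_univ _) ?_ |>.trans ?_
    · intro σ _ hne
      rw [if_neg, zero_mul]
      rintro ⟨hu, he⟩
      apply hne
      apply Subtype.ext
      rw [← Finset.insert_erase hu, he]
    · rw [if_pos ⟨Finset.mem_insert_self _ _, Finset.erase_insert h.1⟩]
  · rw [dif_neg h]
    apply Finset.sum_eq_zero
    intro σ _
    rw [if_neg, zero_mul]
    rintro ⟨hu, he⟩
    apply h
    have hins : insert u (τ : Finset V) = (σ : Finset V) := by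
      rw [← he, Finset.insert_erase hu]
    constructor
    · intro hut
      have : u ∈ (σ : Finset V).erase u := he.symm ▸ hut
      exact (Finset.notMem_erase u _) this
    · rw [hins]; exact σ.2

lemma chains_subsingleton (X : SComplex V) (k : ℕ) (h : X.cells k = ∅) :
    Subsingleton (Chains K X k) := by
  have : IsEmpty ↥(X.cells k) := by
    rw [Finset.isEmpty_coe_sort]; exact h
  exact ⟨fun a b => funext fun x => (this.false x).elim⟩

lemma redHomDim_of_cells_empty (X : SComplex V) (k : ℕ) (h : X.cells k = ∅) :
    redHomDim K X k = 0 := by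
  have := chains_subsingleton K X k h
  have h1 : Subsingleton ↥(cyclesSub K X k) := by
    constructor; intro a b; apply Subtype.ext; apply Subsingleton.elim
  have h2 : Subsingleton (RedHomology K X k) := by
    constructor; intro a b
    obtain ⟨x, rfl⟩ := Submodule.Quotient.mk_surjective _ a
    obtain ⟨y, rfl⟩ := Submodule.Quotient.mk_surjective _ b
    congr 1; apply Subsingleton.elim
  exact Module.finrank_zero_of_subsingleton

/-- If the complex has no cells in degree `k+1` and a nonzero cycle in degree `k = d+1`,
then the reduced homology in degree `k` is nonzero. -/
lemma redHomDim_ne_zero (X : SComplex V) (d : ℕ)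
    (htop : X.cells (d+2) = ∅) (z : Chains K X (d+1))
    (hz : boundary K X d z = 0) (hz0 : z ≠ 0) :
    redHomDim K X (d+1) ≠ 0 := by
  intro hfr
  have hsub := chains_subsingleton K X (d+2) htop
  have hb0 : ∀ c, (boundary K X (d+1)) c = 0 := fun c => by
    rw [Subsingleton.elim c 0, map_zero]
  have hzc : z ∈ cyclesSub K X (d+1) := by
    show z ∈ LinearMap.ker (boundary K X d)
    exact hz
  -- finite dimensionality
  have : Module.Finite K (Chains K X (d+1)) := by infer_instance
  have hfin : Module.Finite K (RedHomology K X (d+1)) := by infer_instance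
  have hss : Subsingleton (RedHomology K X (d+1)) := by
    exact Module.finrank_zero_iff.mp hfr
  have hmem : (⟨z, hzc⟩ : ↥(cyclesSub K X (d+1))) ∈
      Submodule.comap (cyclesSub K X (d+1)).subtype (LinearMap.range (boundary K X (d+1))) := by
    have := Subsingleton.elim
      (Submodule.Quotient.mk (⟨z, hzc⟩ : ↥(cyclesSub K X (d+1))) :
        RedHomology K X (d+1)) 0
    exact (Submodule.Quotient.mk_eq_zero _).1 this
  rw [Submodule.mem_comap] at hmem
  obtain ⟨cc, hcc⟩ := hmem
  rw [hb0 cc] at hcc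
  exact hz0 hcc.symm

lemma isLeray_mono (X : SComplex V) {d d' : ℕ} (h : d ≤ d') (hL : IsLeray K d X) :
    IsLeray K d' X := fun S i hi => hL S i (le_trans h hi)

lemma lerayNum_eq (X : SComplex V) (n : ℕ) (hn : 0 < n)
    (h1 : IsLeray K n X) (h2 : ¬ IsLeray K (n-1) X) : lerayNum K X = n := by
  have hup : ∀ m, m < n → ¬ IsLeray K m X := fun m hm hL =>
    h2 (isLeray_mono K X (by omega) hL)
  apply le_antisymm (Nat.sInf_le h1)
  by_contra hlt
  push_neg at hlt
  exact hup _ hlt (Nat.sInf_mem (⟨n, h1⟩ : Set.Nonempty {d | IsLeray K d X}))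

end SComplex
namespace SComplex
variable {V : Type} [DecidableEq V] [Fintype V] (K : Type) [Field K]

lemma sgn_cancel' (s : Finset V) {u v : V} (hu : u ∈ s) (hv : v ∈ s) (huv : u ≠ v) :
    sgn K s u * sgn K s v + sgn K (s.erase u) v * sgn K (s.erase v) u = 0 := by
  rw [sgn_erase K s hu huv, sgn_erase K s hv (Ne.symm huv)]
  have : Fintype.equivFin V u < Fintype.equivFin V v ∨ Fintype.equivFin V v < Fintype.equivFin V u := by
    rcases lt_trichotomy (Fintype.equivFin V u) (Fintype.equivFin V v) with h|h|h
    · exact Or.inl h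
    · exact absurd ((Fintype.equivFin V).injective (by exact_mod_cast h)) huv
    · exact Or.inr h
  rcases this with h | h
  · rw [if_pos h, if_neg (by omega)]; ring
  · rw [if_neg (by omega), if_pos h]; ring

lemma sgn_cancel'' (σ : Finset V) {u v : V} (hu : u ∉ σ) (hv : v ∈ σ) (huv : u ≠ v) :
    sgn K (insert u σ) u * sgn K (insert u σ) v
      + sgn K σ v * sgn K (insert u (σ.erase v)) u = 0 := by
  have h2 : insert u (σ.erase v) = (insert u σ).erase v :=
    (Finset.erase_insert_of_ne huv).symm
  have h1 : σ = (insert u σ).erase u := (Finset.erase_insert hu).symm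
  rw [h2]
  have h3 : sgn K σ v = sgn K ((insert u σ).erase u) v := by rw [Finset.erase_insert hu]
  rw [h3]
  exact sgn_cancel' K (insert u σ) (Finset.mem_insert_self u σ)
    (Finset.mem_insert_of_mem hv) huv

noncomputable def coneH (X : SComplex V) (v : V) (k : ℕ) (c : Chains K X k) :
    Chains K X (k+1) := fun τ =>
  if h : v ∈ (τ : Finset V) then
    sgn K (τ : Finset V) v * c ⟨(τ : Finset V).erase v, by
      rw [mem_cells]
      refine ⟨X.down_closed (mem_cells.1 τ.2).1 (Finset.erase_subset _ _), ?_⟩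
      rw [Finset.card_erase_of_mem h, (mem_cells.1 τ.2).2]; omega⟩
  else 0

lemma coneH_zero (X : SComplex V) (v : V) (k : ℕ) : coneH K X v k 0 = 0 := by
  funext τ
  rw [coneH]
  split
  · show sgn K (τ : Finset V) v * 0 = 0; rw [mul_zero]
  · rfl

lemma cell_congr (X : SComplex V) (k : ℕ) (c : Chains K X k) {s t : Finset V}
    (hs : s ∈ X.cells k) (ht : t ∈ X.cells k) (hst : s = t) :
    c ⟨s, hs⟩ = c ⟨t, ht⟩ := by subst hst; rfl

lemma coneA (X : SComplex V) (v : V) (hv : ∀ σ ∈ X.faces, insert v σ ∈ X.faces)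
    (k : ℕ) (c : Chains K X k) (σ : ↥(X.cells k)) (hσ : v ∉ (σ : Finset V)) :
    boundary K X k (coneH K X v k c) σ = c σ := by
  rw [boundary_apply']
  have hins : insert v (σ : Finset V) ∈ X.cells (k+1) := by
    rw [mem_cells]
    exact ⟨hv _ (mem_cells.1 σ.2).1, by rw [Finset.card_insert_of_notMem hσ, (mem_cells.1 σ.2).2]⟩
  refine (Fintype.sum_eq_single v ?_).trans ?_
  · intro u hu
    by_cases h : u ∉ (σ : Finset V) ∧ insert u (σ : Finset V) ∈ X.cells (k+1)
    · rw [dif_pos h]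
      simp only [coneH]
      rw [dif_neg, mul_zero]
      intro hc
      rcases Finset.mem_insert.1 hc with h1 | h1
      · exact hu h1.symm
      · exact hσ h1
    · rw [dif_neg h]
  · rw [dif_pos ⟨hσ, hins⟩]
    simp only [coneH]
    rw [dif_pos (Finset.mem_insert_self v _)]
    have key : ∀ e1 : ↥(X.cells k), (e1 : Finset V) = (σ : Finset V) →
        sgn K (insert v (σ : Finset V)) v * (sgn K (insert v (σ : Finset V)) v * c e1) = c σ := by
      intro e1 h1
      have : e1 = σ := Subtype.ext h1
      subst this
      rw [← mul_assoc, sgn_mul_self, one_mul]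
    exact key _ (Finset.erase_insert hσ)

lemma coneB (X : SComplex V) (v : V) (hv : ∀ σ ∈ X.faces, insert v σ ∈ X.faces)
    (k : ℕ) (c : Chains K X (k+1)) (σ : ↥(X.cells (k+1))) (hσ : v ∈ (σ : Finset V)) :
    boundary K X (k+1) (coneH K X v (k+1) c) σ
      + coneH K X v k (boundary K X k c) σ = c σ := by
  have hcard := (mem_cells.1 σ.2).2
  have hface := (mem_cells.1 σ.2).1
  have herase : (σ : Finset V).erase v ∈ X.cells k := by
    rw [mem_cells]
    exact ⟨X.down_closed hface (Finset.erase_subset _ _),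
      by rw [Finset.card_erase_of_mem hσ, hcard]; omega⟩
  rw [boundary_apply']
  simp only [coneH]
  rw [dif_pos hσ]
  rw [boundary_apply' K X k c]
  rw [Finset.mul_sum, ← Finset.sum_add_distrib]
  refine (Fintype.sum_eq_single v ?_).trans ?_
  · -- u ≠ v terms cancel
    intro u huv
    by_cases hcond : u ∉ (σ : Finset V) ∧ insert u (σ : Finset V) ∈ X.cells (k+1+1)
    · have hmemv : v ∈ insert u (σ : Finset V) := Finset.mem_insert_of_mem hσ
      have hcond2 : u ∉ (σ : Finset V).erase v ∧
          insert u ((σ : Finset V).erase v) ∈ X.cells (k+1) := by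
        refine ⟨fun hc => hcond.1 (Finset.mem_of_mem_erase hc), ?_⟩
        rw [mem_cells]
        constructor
        · have hsub : insert u ((σ : Finset V).erase v) ⊆ insert u (σ : Finset V) :=
            Finset.insert_subset_insert _ (Finset.erase_subset _ _)
          exact X.down_closed (mem_cells.1 hcond.2).1 hsub
        · rw [Finset.card_insert_of_notMem (fun hc => hcond.1 (Finset.mem_of_mem_erase hc)),
            (mem_cells.1 herase).2]
      rw [dif_pos hcond, dif_pos hcond2]
      rw [dif_pos hmemv]
      have key : ∀ (e1 e2 : ↥(X.cells (k+1))),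
          (e1 : Finset V) = insert u ((σ : Finset V).erase v) →
          (e2 : Finset V) = insert u ((σ : Finset V).erase v) →
          sgn K (insert u (σ:Finset V)) u * (sgn K (insert u (σ:Finset V)) v * c e1)
            + sgn K (σ:Finset V) v * (sgn K (insert u ((σ:Finset V).erase v)) u * c e2) = 0 := by
        intro e1 e2 h1 h2
        have : e1 = e2 := Subtype.ext (h1.trans h2.symm)
        subst this
        have hfact : sgn K (insert u (σ:Finset V)) u * (sgn K (insert u (σ:Finset V)) v * c e1)
            + sgn K (σ:Finset V) v * (sgn K (insert u ((σ:Finset V).erase v)) u * c e1)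
            = (sgn K (insert u (σ:Finset V)) u * sgn K (insert u (σ:Finset V)) v
              + sgn K (σ:Finset V) v * sgn K (insert u ((σ:Finset V).erase v)) u) * c e1 := by
          ring
        rw [hfact, sgn_cancel'' K _ hcond.1 hσ huv, zero_mul]
      exact key _ _ (Finset.erase_insert_of_ne huv) rfl
    · rw [dif_neg hcond]
      have hcond2 : ¬ (u ∉ (σ : Finset V).erase v ∧
          insert u ((σ : Finset V).erase v) ∈ X.cells (k+1)) := by
        rintro ⟨h1, h2⟩
        apply hcond
        have hu : u ∉ (σ : Finset V) := fun hc => h1 (Finset.mem_erase.2 ⟨huv, hc⟩)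
        refine ⟨hu, ?_⟩
        rw [mem_cells]
        constructor
        · have hthis := hv _ (mem_cells.1 h2).1
          have heq : insert v (insert u ((σ : Finset V).erase v)) = insert u (σ : Finset V) := by
            rw [Finset.insert_comm, Finset.insert_erase hσ]
          rwa [heq] at hthis
        · rw [Finset.card_insert_of_notMem hu, hcard]
      rw [dif_neg hcond2, mul_zero, zero_add]
  · -- u = v term
    have hF : ¬ (v ∉ (σ : Finset V) ∧ insert v (σ : Finset V) ∈ X.cells (k+1+1)) :=
      fun h => h.1 hσ
    rw [dif_neg hF, zero_add]
    have hG : (v ∉ (σ : Finset V).erase v ∧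
        insert v ((σ : Finset V).erase v) ∈ X.cells (k+1)) := by
      refine ⟨Finset.notMem_erase v _, ?_⟩
      rw [Finset.insert_erase hσ]; exact σ.2
    rw [dif_pos hG]
    have key : ∀ e1 : ↥(X.cells (k+1)), (e1 : Finset V) = (σ : Finset V) →
        sgn K ((σ:Finset V)) v * (sgn K (insert v ((σ : Finset V).erase v)) v * c e1) = c σ := by
      intro e1 h1
      have : e1 = σ := Subtype.ext h1
      subst this
      rw [Finset.insert_erase hσ, ← mul_assoc, sgn_mul_self, one_mul]
    exact key _ (Finset.insert_erase hσ)

lemma redHomDim_of_cone (X : SComplex V) (v : V)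
    (hv : ∀ σ ∈ X.faces, insert v σ ∈ X.faces) (k : ℕ) : redHomDim K X k = 0 := by
  have htop : Submodule.comap (cyclesSub K X k).subtype
      (LinearMap.range (boundary K X k)) = ⊤ := by
    rw [Submodule.eq_top_iff']
    intro x
    rw [Submodule.mem_comap]
    match k with
    | 0 =>
      refine ⟨coneH K X v 0 (x : Chains K X 0), ?_⟩
      funext σ
      have hσ : v ∉ (σ : Finset V) := by
        have : (σ : Finset V).card = 0 := (mem_cells.1 σ.2).2
        rw [Finset.card_eq_zero] at this
        rw [this]
        exact Finset.notMem_empty v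
      exact coneA K X v hv 0 _ σ hσ
    | (m+1) =>
      have hx : boundary K X m (x : Chains K X (m+1)) = 0 := x.2
      refine ⟨coneH K X v (m+1) (x : Chains K X (m+1)), ?_⟩
      funext σ
      by_cases hσ : v ∈ (σ : Finset V)
      · have := coneB K X v hv m (x : Chains K X (m+1)) σ hσ
        rw [hx, coneH_zero] at this
        simpa using this
      · exact coneA K X v hv (m+1) _ σ hσ
  have hss : Subsingleton (RedHomology K X k) := by
    rw [Submodule.Quotient.subsingleton_iff]
    exact htop
  exact Module.finrank_zero_of_subsingleton

end SComplex
namespace SComplex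
variable {V : Type} [DecidableEq V] [Fintype V] (K : Type) [Field K]

lemma induced_univ (X : SComplex V) : X.induced Finset.univ = X := by
  apply ext'
  show X.faces.filter (fun σ => σ ⊆ Finset.univ) = X.faces
  rw [Finset.filter_true_of_mem (fun σ _ => Finset.subset_univ σ)]

lemma mem_induced {X : SComplex V} {S σ : Finset V} :
    σ ∈ (X.induced S).faces ↔ σ ∈ X.faces ∧ σ ⊆ S := Finset.mem_filter

lemma mem_joinFam {r : ℕ} {Vs : Fin r → Finset V} {Z : Fin r → SComplex V} {σ : Finset V} :
    σ ∈ (joinFam Vs Z).faces ↔ ∀ i, σ ∩ Vs i ∈ (Z i).faces := by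
  simp [joinFam]

lemma mem_bdSimplex {A σ : Finset V} :
    σ ∈ (bdSimplex A).faces ↔ σ ⊆ A ∧ σ ≠ A := by
  simp only [bdSimplex, Finset.mem_erase, Finset.mem_powerset]
  exact and_comm

lemma mem_simplexOn {A σ : Finset V} :
    σ ∈ (simplexOn A).faces ↔ σ ⊆ A := Finset.mem_powerset

lemma mem_interFam {r : ℕ} {X : Fin r → SComplex V} {σ : Finset V} :
    σ ∈ (interFam X).faces ↔ ∀ i, σ ∈ (X i).faces := by
  simp [interFam]

lemma mem_unionFam {r : ℕ} {X : Fin r → SComplex V} {σ : Finset V} :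
    σ ∈ (unionFam X).faces ↔ ∃ i, σ ∈ (X i).faces := by
  simp [unionFam]

lemma card_eq_sum_inter {m : ℕ} (Bs : Fin m → Finset V)
    (hdisj : ∀ i j, i ≠ j → Disjoint (Bs i) (Bs j)) {σ : Finset V}
    (hσ : σ ⊆ Finset.univ.biUnion Bs) : σ.card = ∑ i, (σ ∩ Bs i).card := by
  have heq : σ = Finset.univ.biUnion (fun i => σ ∩ Bs i) := by
    ext x
    simp only [Finset.mem_biUnion, Finset.mem_inter, Finset.mem_univ, true_and]
    constructor
    · intro hx
      obtain ⟨i, -, hi⟩ := Finset.mem_biUnion.1 (hσ hx)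
      exact ⟨i, hx, hi⟩
    · rintro ⟨i, hx, -⟩; exact hx
  calc σ.card = (Finset.univ.biUnion (fun i => σ ∩ Bs i)).card := by rw [← heq]
    _ = ∑ i, (σ ∩ Bs i).card := Finset.card_biUnion (fun i _ j _ hij =>
        Disjoint.mono Finset.inter_subset_right Finset.inter_subset_right (hdisj i j hij))

lemma sum_eq_one {m : ℕ} (g : Fin m → ℕ) (hs : ∑ i, g i = 1) :
    ∃ i0, g i0 = 1 ∧ ∀ j, j ≠ i0 → g j = 0 := by
  have hex : ∃ i0, g i0 ≠ 0 := by
    by_contra hc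
    push_neg at hc
    rw [Finset.sum_congr rfl (fun i _ => hc i)] at hs
    simp at hs
  obtain ⟨i0, hi0⟩ := hex
  have h1 : g i0 ≤ 1 := hs ▸ Finset.single_le_sum (fun _ _ => Nat.zero_le _) (Finset.mem_univ i0)
  have hsplit : g i0 + ∑ j ∈ Finset.univ.erase i0, g j = 1 := by
    rw [Finset.add_sum_erase _ g (Finset.mem_univ i0)]; exact hs
  refine ⟨i0, by omega, ?_⟩
  intro j hj
  have hj1 : g j ≤ ∑ x ∈ Finset.univ.erase i0, g x :=
    Finset.single_le_sum (fun _ _ => Nat.zero_le _)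
      (Finset.mem_erase.2 ⟨hj, Finset.mem_univ j⟩)
  omega

lemma exists_deficit {m : ℕ} (f : Fin m → ℕ) (h1 : ∀ i, 1 ≤ f i) (hs : ∑ i, f i = m + 1) :
    ∃ i0, f i0 = 2 ∧ ∀ j, j ≠ i0 → f j = 1 := by
  have key : ∑ j, (f j - 1) = 1 := by
    have h2 : ∑ j, (f j - 1) + ∑ j : Fin m, 1 = ∑ j, f j := by
      rw [← Finset.sum_add_distrib]
      exact Finset.sum_congr rfl (fun i _ => by have := h1 i; omega)
    simp only [Finset.sum_const, Finset.card_univ, Fintype.card_fin, smul_eq_mul, mul_one] at h2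
    omega
  obtain ⟨i0, hi0, hrest⟩ := sum_eq_one _ key
  exact ⟨i0, by have := h1 i0; omega, fun j hj => by have := h1 j; have := hrest j hj; omega⟩

end SComplex
namespace SComplex
variable {V : Type} [DecidableEq V] [Fintype V]

lemma ordLt_total {a b : V} (hab : a ≠ b) :
    Fintype.equivFin V a < Fintype.equivFin V b ∨ Fintype.equivFin V b < Fintype.equivFin V a := by
  rcases lt_trichotomy (Fintype.equivFin V a) (Fintype.equivFin V b) with h|h|h
  · exact Or.inl h
  · exact absurd ((Fintype.equivFin V).injective (by exact_mod_cast h)) hab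
  · exact Or.inr h

lemma odd_of_zmod {n : ℕ} (h : (n : ZMod 2) = 1) : Odd n := by
  rcases Nat.even_or_odd n with he | ho
  · exfalso
    have h2 : (n : ZMod 2) = 0 := (ZMod.natCast_eq_zero_iff n 2).2 he.two_dvd
    rw [h2] at h
    exact zero_ne_one h
  · exact ho

lemma neg_one_pow_add_eq_zero (K : Type) [Field K] {a b : ℕ} (h : Odd (a + b)) :
    (-1:K)^a + (-1:K)^b = 0 := by
  rcases Nat.even_or_odd a with ha | ha
  · have hb : Odd b := by
      rcases Nat.even_or_odd b with hb | hb
      · exact absurd (ha.add hb) (by rwa [← Nat.not_even_iff_odd] at h)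
      · exact hb
    rw [ha.neg_one_pow, hb.neg_one_pow]; ring
  · have hb : Even b := by
      rcases Nat.even_or_odd b with hb | hb
      · exact hb
      · exact absurd (ha.add_odd hb) (by rwa [← Nat.not_even_iff_odd] at h)
    rw [ha.neg_one_pow, hb.neg_one_pow]; ring

/-- count of elements of `s` below `u` -/
noncomputable def NN (U : Finset V) (s : Finset V) : ℕ :=
  ∑ u ∈ U \ s, (s.filter (fun w => Fintype.equivFin V w < Fintype.equivFin V u)).card

noncomputable def PP (A B : Finset V) : ℕ :=
  ((A ×ˢ B).filter (fun p => Fintype.equivFin V p.2 < Fintype.equivFin V p.1)).card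

noncomputable def II {m : ℕ} (Bs : Fin m → Finset V) (s : Finset V) : ℕ :=
  ∑ j : Fin m, ∑ j' : Fin m, if j < j' then PP (Bs j \ s) (Bs j' \ s) else 0

noncomputable def ee {m : ℕ} (Bs : Fin m → Finset V) (s : Finset V) : ℕ :=
  NN (Finset.univ.biUnion Bs) s + II Bs s

lemma PP_singleton (a b : V) :
    PP ({a} : Finset V) {b} = if Fintype.equivFin V b < Fintype.equivFin V a then 1 else 0 := by
  rw [PP, Finset.singleton_product_singleton, Finset.filter_singleton]
  split <;> simp

lemma two_zmod_zero : ((2 : ℕ) : ZMod 2) = 0 := by decide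

lemma parity_key {m : ℕ} (Bs : Fin m → Finset V)
    (hdisj : ∀ i j, i ≠ j → Disjoint (Bs i) (Bs j))
    (τ : Finset V) (hτU : τ ⊆ Finset.univ.biUnion Bs)
    (i0 : Fin m) (x y : V)
    (hxy : Fintype.equivFin V x < Fintype.equivFin V y)
    (hset : Bs i0 \ τ = {x, y})
    (hsing : ∀ j, j ≠ i0 → (Bs j \ τ).card = 1) :
    Odd ((τ.filter (fun w => Fintype.equivFin V w < Fintype.equivFin V x)).card
          + ee Bs (insert x τ)
        + ((τ.filter (fun w => Fintype.equivFin V w < Fintype.equivFin V y)).card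
          + ee Bs (insert y τ))) := by
  classical
  set U : Finset V := Finset.univ.biUnion Bs with hU
  set F : Finset V := U \ τ with hF
  have hne : x ≠ y := fun h => by rw [h] at hxy; exact lt_irrefl _ hxy
  have hxmem : x ∈ Bs i0 \ τ := by rw [hset]; exact Finset.mem_insert_self x {y}
  have hymem : y ∈ Bs i0 \ τ := by rw [hset]; exact Finset.mem_insert_of_mem (Finset.mem_singleton_self y)
  have hxB : x ∈ Bs i0 := (Finset.mem_sdiff.1 hxmem).1
  have hyB : y ∈ Bs i0 := (Finset.mem_sdiff.1 hymem).1
  have hxτ : x ∉ τ := (Finset.mem_sdiff.1 hxmem).2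
  have hyτ : y ∉ τ := (Finset.mem_sdiff.1 hymem).2
  have hxF : x ∈ F := Finset.mem_sdiff.2 ⟨Finset.mem_biUnion.2 ⟨i0, Finset.mem_univ _, hxB⟩, hxτ⟩
  have hyF : y ∈ F := Finset.mem_sdiff.2 ⟨Finset.mem_biUnion.2 ⟨i0, Finset.mem_univ _, hyB⟩, hyτ⟩
  -- abbreviations
  set cnt : V → ℕ := fun u => (τ.filter (fun w => Fintype.equivFin V w < Fintype.equivFin V u)).card with hcnt
  set cntx : V → ℕ := fun u => ((insert x τ).filter (fun w => Fintype.equivFin V w < Fintype.equivFin V u)).card with hcntx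
  set cnty : V → ℕ := fun u => ((insert y τ).filter (fun w => Fintype.equivFin V w < Fintype.equivFin V u)).card with hcnty
  set dx : V → ℕ := fun u => if Fintype.equivFin V x < Fintype.equivFin V u then 1 else 0 with hdx
  set dy : V → ℕ := fun u => if Fintype.equivFin V y < Fintype.equivFin V u then 1 else 0 with hdy
  set hN : V → ℕ := fun u => if Fintype.equivFin V x < Fintype.equivFin V u ∧
      Fintype.equivFin V u < Fintype.equivFin V y then 1 else 0 with hhN
  -- Step A
  have hAx : cnt x + NN U (insert x τ) = ∑ u ∈ F, cntx u := by
    have h1 : U \ insert x τ = F.erase x := Finset.sdiff_insert U τ x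
    have h2 : NN U (insert x τ) = ∑ u ∈ F.erase x, cntx u := by
      rw [NN, h1]
    rw [h2, ← Finset.add_sum_erase F cntx hxF]
    congr 1
    simp only [hcntx, hcnt, Finset.filter_insert, if_neg (lt_irrefl (Fintype.equivFin V x))]
  have hAy : cnt y + NN U (insert y τ) = ∑ u ∈ F, cnty u := by
    have h1 : U \ insert y τ = F.erase y := Finset.sdiff_insert U τ y
    have h2 : NN U (insert y τ) = ∑ u ∈ F.erase y, cnty u := by
      rw [NN, h1]
    rw [h2, ← Finset.add_sum_erase F cnty hyF]
    congr 1
    simp only [hcnty, hcnt, Finset.filter_insert, if_neg (lt_irrefl (Fintype.equivFin V y))]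
  -- Step B
  have hBx : ∀ u : V, cntx u = cnt u + dx u := by
    intro u
    simp only [hcntx, hdx, hcnt, Finset.filter_insert]
    by_cases h : Fintype.equivFin V x < Fintype.equivFin V u
    · rw [if_pos h, if_pos h, Finset.card_insert_of_notMem]
      intro hc
      exact hxτ (Finset.mem_filter.1 hc).1
    · rw [if_neg h, if_neg h, add_zero]
  have hBy : ∀ u : V, cnty u = cnt u + dy u := by
    intro u
    simp only [hcnty, hdy, hcnt, Finset.filter_insert]
    by_cases h : Fintype.equivFin V y < Fintype.equivFin V u
    · rw [if_pos h, if_pos h, Finset.card_insert_of_notMem]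
      intro hc
      exact hyτ (Finset.mem_filter.1 hc).1
    · rw [if_neg h, if_neg h, add_zero]
  -- Step D pointwise
  have hD : ∀ u : V, dx u + dy u
      = hN u + (if u = y then 1 else 0)
        + 2 * (if Fintype.equivFin V y < Fintype.equivFin V u then 1 else 0) := by
    intro u
    by_cases h3 : u = y
    · subst h3
      simp [hdx, hdy, hhN, hxy, lt_self_iff_false] <;> omega
    · by_cases h1 : Fintype.equivFin V x < Fintype.equivFin V u
      · by_cases h2 : Fintype.equivFin V y < Fintype.equivFin V u
        · have h5 : ¬ Fintype.equivFin V u < Fintype.equivFin V y := lt_asymm h2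
          simp [hdx, hdy, hhN, h1, h2, h3, h5] <;> omega
        · have h4 : Fintype.equivFin V u < Fintype.equivFin V y := by
            rcases ordLt_total h3 with h | h
            · exact h
            · exact absurd h h2
          simp [hdx, hdy, hhN, h1, h2, h3, h4] <;> omega
      · by_cases hux : u = x
        · subst hux
          have h5 : ¬ Fintype.equivFin V y < Fintype.equivFin V u := lt_asymm hxy
          simp [hdx, hdy, hhN, h3, h5, lt_self_iff_false] <;> omega
        · have h4 : Fintype.equivFin V u < Fintype.equivFin V x := by
            rcases ordLt_total hux with h | h
            · exact h
            · exact absurd h h1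
          have h5 : ¬ Fintype.equivFin V y < Fintype.equivFin V u :=
            lt_asymm (h4.trans hxy)
          simp [hdx, hdy, hhN, h1, h3, h5] <;> omega
  -- sum over F decomposition into blocks
  have hFbi : F = Finset.univ.biUnion (fun j => Bs j \ τ) := by
    ext u
    simp only [hF, hU, Finset.mem_sdiff, Finset.mem_biUnion, Finset.mem_univ, true_and]
    constructor
    · rintro ⟨⟨j, hj⟩, huτ⟩
      exact ⟨j, hj, huτ⟩
    · rintro ⟨j, hj, huτ⟩
      exact ⟨⟨j, hj⟩, huτ⟩
  have hdisjblocks : ∀ i ∈ (Finset.univ : Finset (Fin m)), ∀ j ∈ Finset.univ, i ≠ j →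
      Disjoint (Bs i \ τ) (Bs j \ τ) :=
    fun i _ j _ hij => Disjoint.mono Finset.sdiff_subset Finset.sdiff_subset (hdisj i j hij)
  have hsumhN : ∑ u ∈ F, hN u = ∑ j : Fin m, ∑ u ∈ Bs j \ τ, hN u := by
    rw [hFbi]
    exact Finset.sum_biUnion hdisjblocks
  have hA0 : ∑ u ∈ Bs i0 \ τ, hN u = 0 := by
    rw [hset, Finset.sum_pair hne]
    simp [hhN, lt_self_iff_false]
  -- blocks after inserting x or y
  have hbx : ∀ j, Bs j \ insert x τ = if j = i0 then ({y} : Finset V) else Bs j \ τ := by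
    intro j
    rw [Finset.sdiff_insert]
    by_cases hj : j = i0
    · subst hj
      rw [if_pos rfl, hset]
      have : ({x, y} : Finset V) = insert x {y} := rfl
      rw [this, Finset.erase_insert (fun hc => hne (Finset.mem_singleton.1 hc))]
    · rw [if_neg hj]
      apply Finset.erase_eq_of_notMem
      intro hc
      exact Finset.disjoint_left.1 (hdisj j i0 hj) (Finset.mem_sdiff.1 hc).1 hxB
  have hby : ∀ j, Bs j \ insert y τ = if j = i0 then ({x} : Finset V) else Bs j \ τ := by
    intro j
    rw [Finset.sdiff_insert]
    by_cases hj : j = i0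
    · subst hj
      rw [if_pos rfl, hset]
      have : ({x, y} : Finset V) = insert y {x} := by rw [Finset.pair_comm]
      rw [this, Finset.erase_insert (fun hc => hne (Finset.mem_singleton.1 hc).symm)]
    · rw [if_neg hj]
      apply Finset.erase_eq_of_notMem
      intro hc
      exact Finset.disjoint_left.1 (hdisj j i0 hj) (Finset.mem_sdiff.1 hc).1 hyB
  -- case analyses for singleton blocks
  have hcase1 : ∀ v : V, v ≠ x → v ≠ y →
      (((if Fintype.equivFin V y < Fintype.equivFin V v then 1 else 0 : ℕ) : ZMod 2)
        + ((if Fintype.equivFin V x < Fintype.equivFin V v then 1 else 0 : ℕ) : ZMod 2))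
      = ((hN v : ℕ) : ZMod 2) := by
    intro v hvx hvy
    by_cases h1 : Fintype.equivFin V x < Fintype.equivFin V v
    · by_cases h2 : Fintype.equivFin V v < Fintype.equivFin V y
      · have h6 : ¬ Fintype.equivFin V y < Fintype.equivFin V v := lt_asymm h2
        simp [hhN, h1, h2, h6] <;> decide
      · have h3 : Fintype.equivFin V y < Fintype.equivFin V v := by
          rcases ordLt_total hvy with h | h
          · exact absurd h h2
          · exact h
        simp [hhN, h1, h2, h3] <;> decide
    · have h3 : Fintype.equivFin V v < Fintype.equivFin V x := by
        rcases ordLt_total hvx with h | h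
        · exact h
        · exact absurd h h1
      have h6 : ¬ Fintype.equivFin V y < Fintype.equivFin V v := lt_asymm (h3.trans hxy)
      simp [hhN, h1, h6] <;> decide
  have hcase2 : ∀ v : V, v ≠ x → v ≠ y →
      (((if Fintype.equivFin V v < Fintype.equivFin V y then 1 else 0 : ℕ) : ZMod 2)
        + ((if Fintype.equivFin V v < Fintype.equivFin V x then 1 else 0 : ℕ) : ZMod 2))
      = ((hN v : ℕ) : ZMod 2) := by
    intro v hvx hvy
    by_cases h1 : Fintype.equivFin V v < Fintype.equivFin V x
    · have h6 : ¬ Fintype.equivFin V x < Fintype.equivFin V v := lt_asymm h1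
      simp [hhN, h1, h6, h1.trans hxy] <;> decide
    · have h2 : Fintype.equivFin V x < Fintype.equivFin V v := by
        rcases ordLt_total hvx with h | h
        · exact absurd h h1
        · exact h
      by_cases h3 : Fintype.equivFin V v < Fintype.equivFin V y
      · simp [hhN, h1, h2, h3] <;> decide
      · simp [hhN, h1, h2, h3] <;> decide
  -- pointwise key claim
  have h2z : ∀ z : ZMod 2, z + z = 0 := by decide
  have hPP : ∀ j j' : Fin m,
      ((if j < j' then PP (Bs j \ insert x τ) (Bs j' \ insert x τ) else 0 : ℕ) : ZMod 2)
        + ((if j < j' then PP (Bs j \ insert y τ) (Bs j' \ insert y τ) else 0 : ℕ) : ZMod 2)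
      = ((if j < j' ∧ j' = i0 then (∑ u ∈ Bs j \ τ, hN u) else 0 : ℕ) : ZMod 2)
        + ((if j < j' ∧ j = i0 then (∑ u ∈ Bs j' \ τ, hN u) else 0 : ℕ) : ZMod 2) := by
    intro j j'
    by_cases hjj : j < j'
    · have hjne : j ≠ j' := ne_of_lt hjj
      rw [if_pos hjj, if_pos hjj, hbx j, hbx j', hby j, hby j']
      by_cases hj'i : j' = i0
      · have hji : j ≠ i0 := fun h => hjne (h.trans hj'i.symm)
        rw [if_pos hj'i, if_pos hj'i, if_neg hji, if_neg hji,
          if_pos ⟨hjj, hj'i⟩, if_neg (fun hc => hji hc.2)]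
        obtain ⟨v, hv⟩ := Finset.card_eq_one.1 (hsing j hji)
        have hvB : v ∈ Bs j := by
          have : v ∈ Bs j \ τ := by rw [hv]; exact Finset.mem_singleton_self v
          exact (Finset.mem_sdiff.1 this).1
        have hvx : v ≠ x := fun h =>
          (Finset.disjoint_left.1 (hdisj j i0 hji) hvB) (h ▸ hxB)
        have hvy : v ≠ y := fun h =>
          (Finset.disjoint_left.1 (hdisj j i0 hji) hvB) (h ▸ hyB)
        rw [hv, PP_singleton, PP_singleton, Finset.sum_singleton, Nat.cast_zero, add_zero]
        exact hcase1 v hvx hvy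
      · by_cases hji : j = i0
        · rw [if_pos hji, if_pos hji, if_neg hj'i, if_neg hj'i,
            if_neg (fun hc => hj'i hc.2), if_pos ⟨hjj, hji⟩]
          obtain ⟨v, hv⟩ := Finset.card_eq_one.1 (hsing j' hj'i)
          have hvB : v ∈ Bs j' := by
            have : v ∈ Bs j' \ τ := by rw [hv]; exact Finset.mem_singleton_self v
            exact (Finset.mem_sdiff.1 this).1
          have hvx : v ≠ x := fun h =>
            (Finset.disjoint_left.1 (hdisj j' i0 hj'i) hvB) (h ▸ hxB)
          have hvy : v ≠ y := fun h =>
            (Finset.disjoint_left.1 (hdisj j' i0 hj'i) hvB) (h ▸ hyB)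
          rw [hv, PP_singleton, PP_singleton, Finset.sum_singleton, Nat.cast_zero, zero_add]
          exact hcase2 v hvx hvy
        · rw [if_neg hji, if_neg hji, if_neg hj'i, if_neg hj'i,
            if_neg (fun hc => hj'i hc.2), if_neg (fun hc => hji hc.2)]
          rw [Nat.cast_zero, add_zero]
          exact h2z _
    · rw [if_neg hjj, if_neg hjj, if_neg (fun hc : _ ∧ _ => hjj hc.1),
        if_neg (fun hc : _ ∧ _ => hjj hc.1)]
  -- summed version
  have hgsum : (∑ j : Fin m, ∑ j' : Fin m,
        (if j < j' ∧ j' = i0 then (∑ u ∈ Bs j \ τ, hN u) else 0))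
      + (∑ j : Fin m, ∑ j' : Fin m,
        (if j < j' ∧ j = i0 then (∑ u ∈ Bs j' \ τ, hN u) else 0))
      = ∑ u ∈ F, hN u := by
    have hP1 : ∀ j : Fin m, (∑ j' : Fin m,
        (if j < j' ∧ j' = i0 then (∑ u ∈ Bs j \ τ, hN u) else 0))
        = (if j < i0 then ∑ u ∈ Bs j \ τ, hN u else 0) := by
      intro j
      rw [Finset.sum_eq_single_of_mem i0 (Finset.mem_univ _)]
      · by_cases h : j < i0
        · rw [if_pos ⟨h, rfl⟩, if_pos h]
        · rw [if_neg (fun hc => h hc.1), if_neg h]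
      · intro b _ hb
        rw [if_neg (fun hc => hb hc.2)]
    have hP2 : (∑ j : Fin m, ∑ j' : Fin m,
        (if j < j' ∧ j = i0 then (∑ u ∈ Bs j' \ τ, hN u) else 0))
        = ∑ j' : Fin m, (if i0 < j' then ∑ u ∈ Bs j' \ τ, hN u else 0) := by
      rw [Finset.sum_eq_single_of_mem i0 (Finset.mem_univ _)]
      · apply Finset.sum_congr rfl
        intro j' _
        by_cases h : i0 < j'
        · rw [if_pos ⟨h, rfl⟩, if_pos h]
        · rw [if_neg (fun hc => h hc.1), if_neg h]
      · intro b _ hb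
        apply Finset.sum_eq_zero
        intro j' _
        rw [if_neg (fun hc => hb hc.2)]
    rw [Finset.sum_congr rfl (fun j _ => hP1 j), hP2, ← Finset.sum_add_distrib, hsumhN]
    apply Finset.sum_congr rfl
    intro j _
    rcases lt_trichotomy j i0 with h | h | h
    · rw [if_pos h, if_neg (asymm h), add_zero]
    · subst h
      rw [if_neg (lt_irrefl _), hA0]
    · rw [if_neg (asymm h), if_pos h, zero_add]
  have hcast2 : ∀ (g : Fin m → Fin m → ℕ),
      ((∑ j : Fin m, ∑ j' : Fin m, g j j' : ℕ) : ZMod 2)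
        = ∑ j : Fin m, ∑ j' : Fin m, ((g j j' : ℕ) : ZMod 2) := by
    intro g
    rw [Nat.cast_sum]
    exact Finset.sum_congr rfl (fun j _ => Nat.cast_sum _ _)
  have hG : ((II Bs (insert x τ) : ℕ) : ZMod 2) + ((II Bs (insert y τ) : ℕ) : ZMod 2)
      = ((∑ u ∈ F, hN u : ℕ) : ZMod 2) := by
    simp only [II]
    rw [hcast2, hcast2, ← hgsum, Nat.cast_add, hcast2, hcast2,
      ← Finset.sum_add_distrib, ← Finset.sum_add_distrib]
    apply Finset.sum_congr rfl
    intro j _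
    rw [← Finset.sum_add_distrib, ← Finset.sum_add_distrib]
    apply Finset.sum_congr rfl
    intro j' _
    exact hPP j j'
  -- final assembly
  apply odd_of_zmod
  have hT : (τ.filter (fun w => Fintype.equivFin V w < Fintype.equivFin V x)).card
          + ee Bs (insert x τ)
        + ((τ.filter (fun w => Fintype.equivFin V w < Fintype.equivFin V y)).card
          + ee Bs (insert y τ))
      = 2 * (∑ u ∈ F, cnt u) + (∑ u ∈ F, hN u) + 1
        + 2 * (∑ u ∈ F, (if Fintype.equivFin V y < Fintype.equivFin V u then 1 else 0))
        + (II Bs (insert x τ) + II Bs (insert y τ)) := by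
    have e1 : (∑ u ∈ F, cntx u) + (∑ u ∈ F, cnty u)
        = 2 * (∑ u ∈ F, cnt u) + (∑ u ∈ F, (dx u + dy u)) := by
      rw [← Finset.sum_add_distrib, Finset.mul_sum, ← Finset.sum_add_distrib]
      apply Finset.sum_congr rfl
      intro u _
      rw [hBx u, hBy u]
      ring
    have e2 : (∑ u ∈ F, (dx u + dy u))
        = (∑ u ∈ F, hN u) + 1
          + 2 * (∑ u ∈ F, (if Fintype.equivFin V y < Fintype.equivFin V u then 1 else 0)) := by
      have e3 : (∑ u ∈ F, (dx u + dy u))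
          = ∑ u ∈ F, (hN u + (if u = y then 1 else 0)
            + 2 * (if Fintype.equivFin V y < Fintype.equivFin V u then 1 else 0)) :=
        Finset.sum_congr rfl (fun u _ => hD u)
      rw [e3, Finset.sum_add_distrib, Finset.sum_add_distrib, Finset.sum_ite_eq' F y (fun _ => 1),
        if_pos hyF, Finset.mul_sum]
    have e4 := hAx
    have e5 := hAy
    simp only [hcnt] at e4 e5
    rw [ee, ee, ← hU]
    omega
  rw [hT]
  have e6 : ((2 * (∑ u ∈ F, cnt u) + (∑ u ∈ F, hN u) + 1
        + 2 * (∑ u ∈ F, (if Fintype.equivFin V y < Fintype.equivFin V u then 1 else 0))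
        + (II Bs (insert x τ) + II Bs (insert y τ)) : ℕ) : ZMod 2)
      = ((∑ u ∈ F, hN u : ℕ) : ZMod 2) + 1
        + (((II Bs (insert x τ) : ℕ) : ZMod 2) + ((II Bs (insert y τ) : ℕ) : ZMod 2))
        + 2 * (((∑ u ∈ F, cnt u : ℕ) : ZMod 2)
          + ((∑ u ∈ F, (if Fintype.equivFin V y < Fintype.equivFin V u then 1 else 0) : ℕ) : ZMod 2)) := by
    push_cast
    ring
  rw [e6, hG]
  have h2m : ∀ z : ZMod 2, 2 * z = 0 := by decide
  rw [h2m, add_zero]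
  have hfin : ∀ z : ZMod 2, z + 1 + z = 1 := by decide
  exact hfin _

end SComplex
namespace SComplex
variable {V : Type} [DecidableEq V] [Fintype V]

lemma topCycle (K : Type) [Field K] {m : ℕ} (hm : 0 < m) (Bs : Fin m → Finset V)
    (hdisj : ∀ i j, i ≠ j → Disjoint (Bs i) (Bs j)) (hB : ∀ i, 2 ≤ (Bs i).card)
    (X : SComplex V)
    (hfaces : ∀ σ : Finset V, σ ∈ X.faces ↔
      σ ⊆ Finset.univ.biUnion Bs ∧ ∀ i, σ ∩ Bs i ≠ Bs i) :
    redHomDim K X (∑ i, ((Bs i).card - 1)) ≠ 0 := by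
  have hd : 1 ≤ ∑ i, ((Bs i).card - 1) := by
    have h0 : (Bs ⟨0, hm⟩).card - 1 ≤ ∑ i, ((Bs i).card - 1) :=
      Finset.single_le_sum (f := fun i => (Bs i).card - 1)
        (fun i _ => Nat.zero_le _) (Finset.mem_univ (⟨0, hm⟩ : Fin m))
    have := hB ⟨0, hm⟩
    omega
  obtain ⟨d', hd'⟩ : ∃ d', ∑ i, ((Bs i).card - 1) = d' + 1 :=
    ⟨(∑ i, ((Bs i).card - 1)) - 1, by omega⟩
  rw [hd']
  have hle : ∀ σ : Finset V, σ ∈ X.faces → σ.card ≤ d' + 1 := by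
    intro σ hσ
    obtain ⟨hsub, hproper⟩ := (hfaces σ).1 hσ
    have hcard := card_eq_sum_inter Bs hdisj hsub
    have hle1 : ∀ i, (σ ∩ Bs i).card ≤ (Bs i).card - 1 := by
      intro i
      have hlt : (σ ∩ Bs i).card < (Bs i).card :=
        Finset.card_lt_card (lt_of_le_of_ne Finset.inter_subset_right (hproper i))
      omega
    have hsum := Finset.sum_le_sum (fun i (_ : i ∈ Finset.univ) => hle1 i)
    omega
  have htop : X.cells (d' + 2) = ∅ := by
    rw [Finset.eq_empty_iff_forall_notMem]
    intro σ hσ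
    rw [mem_cells] at hσ
    have := hle σ hσ.1
    omega
  apply redHomDim_ne_zero K X d' htop (fun σ => (-1:K)^(ee Bs (σ : Finset V))) ?_ ?_
  · -- boundary z = 0
    funext τ
    rw [boundary_apply']
    have hfτ := mem_cells.1 τ.2
    obtain ⟨hsubU, hproper⟩ := (hfaces _).1 hfτ.1
    have hcardτ : (τ : Finset V).card = d' := hfτ.2
    have hge1 : ∀ i, 1 ≤ (Bs i \ (τ : Finset V)).card := by
      intro i
      rw [Nat.one_le_iff_ne_zero, ne_eq, Finset.card_eq_zero, ← ne_eq]
      rw [← Finset.nonempty_iff_ne_empty, Finset.sdiff_nonempty]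
      intro hsub
      exact hproper i (Finset.inter_eq_right.2 hsub)
    have hsum : ∑ i, (Bs i \ (τ : Finset V)).card = m + 1 := by
      have h1 : ∀ i, (Bs i \ (τ : Finset V)).card + (Bs i ∩ (τ : Finset V)).card = (Bs i).card :=
        fun i => Finset.card_sdiff_add_card_inter _ _
      have h2 : ∑ i, ((Bs i \ (τ : Finset V)).card + (Bs i ∩ (τ : Finset V)).card)
          = ∑ i, (Bs i).card := Finset.sum_congr rfl (fun i _ => h1 i)
      rw [Finset.sum_add_distrib] at h2
      have h3 : ∑ i, (Bs i ∩ (τ : Finset V)).card = d' := by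
        have := card_eq_sum_inter Bs hdisj hsubU
        rw [hcardτ] at this
        have h6 : ∑ i, (Bs i ∩ (τ : Finset V)).card = ∑ i, ((τ : Finset V) ∩ Bs i).card :=
          Finset.sum_congr rfl (fun i _ => by rw [Finset.inter_comm])
        omega
      have h4 : ∑ i, (Bs i).card = (d' + 1) + m := by
        have h5 : ∑ i, (Bs i).card = ∑ i, (((Bs i).card - 1) + 1) :=
          Finset.sum_congr rfl (fun i _ => by have := hB i; omega)
        rw [h5, Finset.sum_add_distrib, hd']
        simp [Finset.card_univ]
      omega
    obtain ⟨i0, hf2, hf1⟩ := exists_deficit _ hge1 hsum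
    have hpair : ∃ x y : V, Fintype.equivFin V x < Fintype.equivFin V y ∧
        Bs i0 \ (τ : Finset V) = {x, y} := by
      obtain ⟨x, y, hxyne, hset⟩ := Finset.card_eq_two.1 hf2
      rcases ordLt_total hxyne with hlt | hlt
      · exact ⟨x, y, hlt, hset⟩
      · exact ⟨y, x, hlt, by rw [hset, Finset.pair_comm]⟩
    obtain ⟨x, y, hxy, hset⟩ := hpair
    have hxmem : x ∈ Bs i0 \ (τ : Finset V) := by
      rw [hset]; exact Finset.mem_insert_self x {y}
    have hymem : y ∈ Bs i0 \ (τ : Finset V) := by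
      rw [hset]; exact Finset.mem_insert_of_mem (Finset.mem_singleton_self y)
    have hx : x ∉ (τ : Finset V) := (Finset.mem_sdiff.1 hxmem).2
    have hy : y ∉ (τ : Finset V) := (Finset.mem_sdiff.1 hymem).2
    have hxB : x ∈ Bs i0 := (Finset.mem_sdiff.1 hxmem).1
    have hyB : y ∈ Bs i0 := (Finset.mem_sdiff.1 hymem).1
    have hne : x ≠ y := fun h => by rw [h] at hxy; exact lt_irrefl _ hxy
    have hzero : ∀ u ∈ Finset.univ, u ∉ ({x, y} : Finset V) →
        (if h : u ∉ (τ : Finset V) ∧ insert u (τ : Finset V) ∈ X.cells (d'+1) then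
          sgn K (insert u (τ : Finset V)) u *
            (fun σ : ↥(X.cells (d'+1)) => (-1:K)^(ee Bs (σ : Finset V)))
              ⟨insert u (τ : Finset V), h.2⟩ else 0) = 0 := by
      intro u _ hupair
      rw [dif_neg]
      rintro ⟨huτ, hucell⟩
      have huface := (mem_cells.1 hucell).1
      obtain ⟨husub, huprop⟩ := (hfaces _).1 huface
      have huU : u ∈ Finset.univ.biUnion Bs := husub (Finset.mem_insert_self u _)
      obtain ⟨j, -, hj⟩ := Finset.mem_biUnion.1 huU
      by_cases hji : j = i0
      · subst hji
        exact hupair (hset ▸ Finset.mem_sdiff.2 ⟨hj, huτ⟩)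
      · obtain ⟨v, hv⟩ := Finset.card_eq_one.1 (hf1 j hji)
        apply huprop j
        apply Finset.inter_eq_right.2
        intro b hb
        by_cases hbτ : b ∈ (τ : Finset V)
        · exact Finset.mem_insert_of_mem hbτ
        · have : b ∈ Bs j \ (τ : Finset V) := Finset.mem_sdiff.2 ⟨hb, hbτ⟩
          rw [hv, Finset.mem_singleton] at this
          have hu' : u ∈ Bs j \ (τ : Finset V) := Finset.mem_sdiff.2 ⟨hj, huτ⟩
          rw [hv, Finset.mem_singleton] at hu'
          rw [this, ← hu']
          exact Finset.mem_insert_self u _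
    rw [← Finset.sum_subset (Finset.subset_univ ({x, y} : Finset V)) hzero]
    rw [Finset.sum_pair hne]
    -- conditions hold for x and y
    have hcondgen : ∀ u : V, u ∈ Bs i0 \ (τ : Finset V) →
        (u ∉ (τ : Finset V) ∧ insert u (τ : Finset V) ∈ X.cells (d'+1)) := by
      intro u humem
      have huB : u ∈ Bs i0 := (Finset.mem_sdiff.1 humem).1
      have huτ : u ∉ (τ : Finset V) := (Finset.mem_sdiff.1 humem).2
      refine ⟨huτ, mem_cells.2 ⟨(hfaces _).2 ⟨?_, ?_⟩, ?_⟩⟩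
      · exact Finset.insert_subset
          (Finset.mem_biUnion.2 ⟨i0, Finset.mem_univ _, huB⟩) hsubU
      · intro i heq
        have hsubi : Bs i ⊆ insert u (τ : Finset V) := Finset.inter_eq_right.1 heq
        by_cases hii : i = i0
        · rw [hii] at hsubi
          -- one of x, y differs from u and lies in Bs i0 \ τ
          have hother : ∃ w, w ∈ Bs i0 \ (τ : Finset V) ∧ w ≠ u := by
            by_cases hux : u = x
            · exact ⟨y, hymem, fun h => hne (h.trans hux).symm⟩
            · exact ⟨x, hxmem, fun h => hux h.symm⟩
          obtain ⟨w, hwmem, hwu⟩ := hother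
          have hwB : w ∈ Bs i0 := (Finset.mem_sdiff.1 hwmem).1
          have hwτ : w ∉ (τ : Finset V) := (Finset.mem_sdiff.1 hwmem).2
          rcases Finset.mem_insert.1 (hsubi hwB) with h1 | h1
          · exact hwu h1
          · exact hwτ h1
        · obtain ⟨v, hv⟩ := Finset.card_eq_one.1 (hf1 i hii)
          have hvmem : v ∈ Bs i \ (τ : Finset V) := by rw [hv]; exact Finset.mem_singleton_self v
          have hvB : v ∈ Bs i := (Finset.mem_sdiff.1 hvmem).1
          have hvτ : v ∉ (τ : Finset V) := (Finset.mem_sdiff.1 hvmem).2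
          rcases Finset.mem_insert.1 (hsubi hvB) with h1 | h1
          · -- v = u, but u ∈ Bs i0 and v ∈ Bs i, disjoint
            rw [h1] at hvB
            exact Finset.disjoint_left.1 (hdisj i i0 hii) hvB huB
          · exact hvτ h1
      · rw [Finset.card_insert_of_notMem huτ, hcardτ]
    have hcx := hcondgen x hxmem
    have hcy := hcondgen y hymem
    rw [dif_pos hcx, dif_pos hcy]
    show sgn K (insert x (τ : Finset V)) x * (-1:K)^(ee Bs (insert x (τ : Finset V)))
      + sgn K (insert y (τ : Finset V)) y * (-1:K)^(ee Bs (insert y (τ : Finset V))) = 0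
    have hsx : sgn K (insert x (τ : Finset V)) x
        = (-1:K)^(((τ : Finset V).filter
            (fun w => Fintype.equivFin V w < Fintype.equivFin V x)).card) := by
      rw [sgn, Finset.filter_insert, if_neg (lt_irrefl _)]
    have hsy : sgn K (insert y (τ : Finset V)) y
        = (-1:K)^(((τ : Finset V).filter
            (fun w => Fintype.equivFin V w < Fintype.equivFin V y)).card) := by
      rw [sgn, Finset.filter_insert, if_neg (lt_irrefl _)]
    rw [hsx, hsy, ← pow_add, ← pow_add]
    exact neg_one_pow_add_eq_zero K
      (parity_key Bs hdisj (τ : Finset V) hsubU i0 x y hxy hset hf1)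
  · -- z ≠ 0
    intro h0
    have hne : ∀ i, (Bs i).Nonempty := fun i => Finset.card_pos.1 (by have := hB i; omega)
    choose w hw using hne
    set σ0 : Finset V := Finset.univ.biUnion Bs \ Finset.univ.image w with hσ0
    have hσ0i : ∀ i, σ0 ∩ Bs i = (Bs i).erase (w i) := by
      intro i
      ext b
      simp only [hσ0, Finset.mem_inter, Finset.mem_sdiff, Finset.mem_biUnion, Finset.mem_image,
        Finset.mem_erase, Finset.mem_univ, true_and]
      constructor
      · rintro ⟨⟨-, hnim⟩, hbB⟩
        exact ⟨fun h => hnim ⟨i, h ▸ rfl⟩, hbB⟩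
      · rintro ⟨hbw, hbB⟩
        refine ⟨⟨⟨i, hbB⟩, ?_⟩, hbB⟩
        rintro ⟨j, hj⟩
        by_cases hji : j = i
        · exact hbw (hji ▸ hj.symm) 
        · exact Finset.disjoint_left.1 (hdisj j i hji) (hj ▸ hw j) hbB
    have hσ0face : σ0 ∈ X.faces := by
      rw [hfaces]
      refine ⟨Finset.sdiff_subset, ?_⟩
      intro i heq
      rw [hσ0i i] at heq
      exact (Finset.erase_eq_self.1 heq) (hw i)
    have hσ0card : σ0.card = d' + 1 := by
      rw [card_eq_sum_inter Bs hdisj (by exact Finset.sdiff_subset), ← hd']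
      apply Finset.sum_congr rfl
      intro i _
      rw [hσ0i i, Finset.card_erase_of_mem (hw i)]
    have := congrFun h0 ⟨σ0, mem_cells.2 ⟨hσ0face, hσ0card⟩⟩
    simp only at this
    exact pow_ne_zero _ (neg_ne_zero.2 (one_ne_zero)) this

end SComplex
open SComplex in
/-- **Example (sharpness).** Let `V_1, …, V_r` be disjoint sets with
`|V_i| = a_i ≥ 2` partitioning the vertex set `V`, and let
`X_i = Δ(V_1) * ⋯ * ∂Δ(V_i) * ⋯ * Δ(V_r)`.  Then `L_K(X_i) = a_i - 1`;
`∩_{i=1}^r X_i = ∂Δ(V_1) * ⋯ * ∂Δ(V_r)` with `L_K(∩ X_i) = ∑ a_i - r`; and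
`∪_{i=1}^r X_i = ∂Δ(V)` with `L_K(∪ X_i) = ∑ a_i - 1`.  In particular equality
holds in both inequalities `L_K(∩ X_i) ≤ ∑ L_K(X_i)` and
`L_K(∪ X_i) ≤ ∑ L_K(X_i) + r - 1`. -/
theorem leray_join_example {V : Type} [DecidableEq V] [Fintype V]
    (K : Type) [Field K] {r : ℕ} (hr : 0 < r)
    (Vs : Fin r → Finset V) (a : Fin r → ℕ)
    (hdisj : ∀ i j, i ≠ j → Disjoint (Vs i) (Vs j))
    (hcover : Finset.univ.biUnion Vs = (Finset.univ : Finset V))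
    (hcard : ∀ i, (Vs i).card = a i) (ha : ∀ i, 2 ≤ a i)
    (X : Fin r → SComplex V)
    (hX : ∀ i, X i = joinFam Vs (fun j => if j = i then bdSimplex (Vs j) else simplexOn (Vs j))) :
    (∀ i, lerayNum K (X i) = a i - 1) ∧
    interFam X = joinFam Vs (fun i => bdSimplex (Vs i)) ∧
    lerayNum K (interFam X) = (∑ i, a i) - r ∧
    unionFam X = bdSimplex (Finset.univ : Finset V) ∧
    lerayNum K (unionFam X) = (∑ i, a i) - 1 := by
  have hcardVs : ∀ i, 2 ≤ (Vs i).card := fun i => (hcard i).symm ▸ ha i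
  have hbi1 : ∀ (A : Finset V), Finset.univ.biUnion (fun _ : Fin 1 => A) = A := by
    intro A; ext v
    simp [Finset.mem_biUnion]
  have hdisj1 : ∀ (A : Finset V), ∀ i j : Fin 1, i ≠ j → Disjoint A A := by
    intro A i j hij
    exact absurd (Subsingleton.elim i j) hij
  have hsuma : ∑ i, ((Vs i).card - 1) = (∑ i, a i) - r := by
    have h1 : ∑ i, (a i - 1) + ∑ i : Fin r, 1 = ∑ i, a i := by
      rw [← Finset.sum_add_distrib]
      exact Finset.sum_congr rfl (fun i _ => by have := ha i; omega)
    have h2 : ∑ i, ((Vs i).card - 1) = ∑ i, (a i - 1) :=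
      Finset.sum_congr rfl (fun i _ => by rw [hcard i])
    simp only [Finset.sum_const, Finset.card_univ, Fintype.card_fin, smul_eq_mul, mul_one] at h1
    omega
  have hsumge : 2 * r ≤ ∑ i, a i := by
    calc 2 * r = ∑ _i : Fin r, 2 := by
          simp [Finset.sum_const, Finset.card_univ, mul_comm]
      _ ≤ ∑ i, a i := Finset.sum_le_sum (fun i _ => ha i)
  -- the faces of X i
  have hXmem : ∀ i (σ : Finset V), σ ∈ (X i).faces ↔
      (∀ j, σ ∩ Vs j ⊆ Vs j) ∧ σ ∩ Vs i ≠ Vs i := by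
    intro i σ
    rw [hX i, mem_joinFam]
    constructor
    · intro h
      refine ⟨fun j => Finset.inter_subset_right, ?_⟩
      have := h i
      rw [if_pos rfl, mem_bdSimplex] at this
      exact this.2
    · rintro ⟨-, hne⟩ j
      by_cases hji : j = i
      · subst hji
        rw [if_pos rfl, mem_bdSimplex]
        exact ⟨Finset.inter_subset_right, hne⟩
      · rw [if_neg hji]
        exact mem_simplexOn.2 Finset.inter_subset_right
  -- intersection identification
  have hIeq : interFam X = joinFam Vs (fun i => bdSimplex (Vs i)) := by
    apply ext'
    ext σ
    rw [mem_interFam, mem_joinFam]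
    constructor
    · intro h j
      rw [mem_bdSimplex]
      exact ⟨Finset.inter_subset_right, ((hXmem j σ).1 (h j)).2⟩
    · intro h i
      rw [hXmem i σ]
      exact ⟨fun j => Finset.inter_subset_right, ((mem_bdSimplex).1 (h i)).2⟩
  -- union identification
  have hUeq : unionFam X = bdSimplex (Finset.univ : Finset V) := by
    apply ext'
    ext σ
    rw [mem_unionFam, mem_bdSimplex]
    constructor
    · rintro ⟨i, hi⟩
      refine ⟨Finset.subset_univ σ, ?_⟩
      intro hσu
      apply ((hXmem i σ).1 hi).2
      rw [hσu, Finset.univ_inter]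
    · rintro ⟨-, hne⟩
      have hex : ∃ v, v ∉ σ := by
        by_contra hc
        push_neg at hc
        exact hne (Finset.eq_univ_iff_forall.2 hc)
      obtain ⟨v, hv⟩ := hex
      have hvU : v ∈ Finset.univ.biUnion Vs := by rw [hcover]; exact Finset.mem_univ v
      obtain ⟨i, -, hvi⟩ := Finset.mem_biUnion.1 hvU
      refine ⟨i, (hXmem i σ).2 ⟨fun j => Finset.inter_subset_right, ?_⟩⟩
      intro heq
      have : v ∈ σ ∩ Vs i := heq.symm ▸ hvi
      exact hv (Finset.mem_inter.1 this).1
  -- faces of X i induced on Vs i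
  have hXind : ∀ i (σ : Finset V), σ ∈ ((X i).induced (Vs i)).faces ↔
      (σ ⊆ Finset.univ.biUnion (fun _ : Fin 1 => Vs i) ∧
        ∀ _j : Fin 1, σ ∩ Vs i ≠ Vs i) := by
    intro i σ
    rw [mem_induced, hXmem i σ, hbi1]
    constructor
    · rintro ⟨⟨-, hne⟩, hsub⟩
      exact ⟨hsub, fun _ => hne⟩
    · rintro ⟨hsub, hne⟩
      exact ⟨⟨fun j => Finset.inter_subset_right, hne 0⟩, hsub⟩
  -- Leray numbers of the X i
  have hlerayXi : ∀ i, lerayNum K (X i) = a i - 1 := by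
    intro i
    apply lerayNum_eq K (X i) (a i - 1) (by have := ha i; omega)
    · -- IsLeray (a i - 1)
      intro S i' hi'
      by_cases hex : ∃ j, j ≠ i ∧ (S ∩ Vs j).Nonempty
      · obtain ⟨j, hji, v, hv⟩ := hex
        have hvS : v ∈ S := (Finset.mem_inter.1 hv).1
        have hvVj : v ∈ Vs j := (Finset.mem_inter.1 hv).2
        apply redHomDim_of_cone K _ v
        intro σ hσ
        rw [mem_induced] at hσ ⊢
        refine ⟨?_, Finset.insert_subset hvS hσ.2⟩
        rw [hXmem i] at hσ ⊢
        obtain ⟨⟨-, hne⟩, -⟩ := hσ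
        refine ⟨fun l => Finset.inter_subset_right, ?_⟩
        have hvnotVi : v ∉ Vs i := fun hc =>
          Finset.disjoint_left.1 (hdisj j i hji) hvVj hc
        rw [Finset.insert_inter_of_notMem hvnotVi]
        exact hne
      · push_neg at hex
        apply redHomDim_of_cells_empty
        rw [Finset.eq_empty_iff_forall_notMem]
        intro σ hσ
        rw [mem_cells, mem_induced] at hσ
        obtain ⟨⟨hface, hsubS⟩, hcardσ⟩ := hσ
        rw [hXmem i] at hface
        have hσVi : σ ⊆ Vs i := by
          intro w hw
          have hwU : w ∈ Finset.univ.biUnion Vs := by rw [hcover]; exact Finset.mem_univ w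
          obtain ⟨l, -, hl⟩ := Finset.mem_biUnion.1 hwU
          by_cases hli : l = i
          · exact hli ▸ hl
          · exfalso
            have h0 : S ∩ Vs l = ∅ :=
              hex l hli
            have : w ∈ S ∩ Vs l := Finset.mem_inter.2 ⟨hsubS hw, hl⟩
            rw [h0] at this
            exact Finset.notMem_empty w this
        have hlt : σ.card < (Vs i).card := by
          apply Finset.card_lt_card
          refine lt_of_le_of_ne hσVi ?_
          intro heq
          apply hface.2
          rw [heq]
          exact Finset.inter_eq_left.2 (heq ▸ hσVi)
        rw [hcard i] at hlt
        omega
    · -- not IsLeray (a i - 2)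
      intro hL
      have h0 := hL (Vs i) (a i - 2) (by omega)
      have hne := topCycle K one_pos (fun _ : Fin 1 => Vs i)
        (hdisj1 (Vs i)) (fun _ => hcardVs i) ((X i).induced (Vs i)) (hXind i)
      have hidx : ∑ _j : Fin 1, ((Vs i).card - 1) = (a i - 2) + 1 := by
        simp only [Finset.sum_const, Finset.card_univ, Fintype.card_fin, smul_eq_mul, one_mul]
        have := ha i
        rw [hcard i]
        omega
      rw [hidx] at hne
      exact hne h0
  refine ⟨hlerayXi, hIeq, ?_, hUeq, ?_⟩
  · -- leray of intersection
    rw [hIeq]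
    have hrge1 : 1 ≤ (∑ i, a i) - r := by omega
    apply lerayNum_eq K _ ((∑ i, a i) - r) hrge1
    · intro S i' hi'
      apply redHomDim_of_cells_empty
      rw [Finset.eq_empty_iff_forall_notMem]
      intro σ hσ
      rw [mem_cells, mem_induced] at hσ
      obtain ⟨⟨hface, -⟩, hcardσ⟩ := hσ
      rw [mem_joinFam] at hface
      have hsub : σ ⊆ Finset.univ.biUnion Vs := by rw [hcover]; exact Finset.subset_univ σ
      have hcs := card_eq_sum_inter Vs hdisj hsub
      have hle1 : ∀ j, (σ ∩ Vs j).card ≤ (Vs j).card - 1 := by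
        intro j
        have := (mem_bdSimplex).1 (hface j)
        have hlt : (σ ∩ Vs j).card < (Vs j).card :=
          Finset.card_lt_card (lt_of_le_of_ne this.1 this.2)
        omega
      have hsum := Finset.sum_le_sum (fun j (_ : j ∈ Finset.univ) => hle1 j)
      omega
    · intro hL
      have h0 := hL Finset.univ ((∑ i, a i) - r - 1) (le_refl _)
      rw [induced_univ] at h0
      have hfaces' : ∀ σ : Finset V, σ ∈ (joinFam Vs (fun i => bdSimplex (Vs i))).faces ↔
          σ ⊆ Finset.univ.biUnion Vs ∧ ∀ i, σ ∩ Vs i ≠ Vs i := by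
        intro σ
        rw [mem_joinFam]
        constructor
        · intro h
          exact ⟨by rw [hcover]; exact Finset.subset_univ σ,
            fun i => ((mem_bdSimplex).1 (h i)).2⟩
        · rintro ⟨-, h⟩ i
          exact mem_bdSimplex.2 ⟨Finset.inter_subset_right, h i⟩
      have hne := topCycle K hr Vs hdisj hcardVs _ hfaces'
      have hidx : ∑ i, ((Vs i).card - 1) = ((∑ i, a i) - r - 1) + 1 := by omega
      rw [hidx] at hne
      exact hne h0
  · -- leray of union
    rw [hUeq]
    have hcardV : (Finset.univ : Finset V).card = ∑ i, a i := by
      rw [← hcover, Finset.card_biUnion (fun i _ j _ hij => hdisj i j hij)]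
      exact Finset.sum_congr rfl (fun i _ => hcard i)
    apply lerayNum_eq K _ ((∑ i, a i) - 1) (by omega)
    · intro S i' hi'
      apply redHomDim_of_cells_empty
      rw [Finset.eq_empty_iff_forall_notMem]
      intro σ hσ
      rw [mem_cells, mem_induced] at hσ
      obtain ⟨⟨hface, -⟩, hcardσ⟩ := hσ
      rw [mem_bdSimplex] at hface
      have hlt : σ.card < (Finset.univ : Finset V).card :=
        Finset.card_lt_card (lt_of_le_of_ne hface.1 hface.2)
      omega
    · intro hL
      have h0 := hL Finset.univ ((∑ i, a i) - 2) (by omega)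
      rw [induced_univ] at h0
      have hfaces' : ∀ σ : Finset V,
          σ ∈ (bdSimplex (Finset.univ : Finset V)).faces ↔
          σ ⊆ Finset.univ.biUnion (fun _ : Fin 1 => (Finset.univ : Finset V)) ∧
          ∀ _j : Fin 1, σ ∩ Finset.univ ≠ Finset.univ := by
        intro σ
        rw [mem_bdSimplex, hbi1]
        constructor
        · rintro ⟨hs, hne⟩
          exact ⟨hs, fun _ => by rwa [Finset.inter_univ]⟩
        · rintro ⟨hs, hne⟩
          refine ⟨hs, ?_⟩
          have := hne 0
          rwa [Finset.inter_univ] at this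
      have hne := topCycle K one_pos (fun _ : Fin 1 => (Finset.univ : Finset V))
        (hdisj1 _) (fun _ => by rw [hcardV]; omega) _ hfaces'
      have hidx : ∑ _j : Fin 1, ((Finset.univ : Finset V).card - 1)
          = ((∑ i, a i) - 2) + 1 := by
        simp only [Finset.sum_const, Finset.card_univ, Fintype.card_fin, smul_eq_mul, one_mul]
        rw [← Finset.card_univ, hcardV]
        omega
      rw [hidx] at hne
      exact hne h0
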